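/- arXiv:2504.18822 — 2 statements merged into one kernel-verified Lean document; each statement's English description precedes it below -/
import Mathlib

section
/- For any jointly defined square-integrable random vectors X and Y in ℝ^d, ‖C_{X,X} − C_{Y,Y}‖_F ≤ 2 E[‖X − Y‖²] + 2 (E[‖X − Y‖²])^{1/2} (Tr(C_{Y,Y}))^{1/2}. -/
open MeasureTheory ProbabilityTheory Matrix
open scoped ENNReal NNReal

noncomputable section

/-- Frobenius norm of a real matrix. -/
def frob {d : ℕ} (M : Matrix (Fin d) (Fin d) ℝ) : ℝ := Real.sqrt (∑ i, ∑ j, (M i j)^2)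

/-- Cross-covariance matrix of two random vectors. -/
def covM {d : ℕ} {Ω : Type*} [MeasurableSpace Ω] (P : Measure Ω)
    (X Y : Ω → EuclideanSpace ℝ (Fin d)) : Matrix (Fin d) (Fin d) ℝ :=
  Matrix.of fun i j =>
    ∫ ω, (X ω i - ∫ ω', X ω' i ∂P) * (Y ω j - ∫ ω', Y ω' j ∂P) ∂P

section Aux

variable {Ω : Type*} [MeasurableSpace Ω] {P : Measure Ω}

lemma aux_integrable_mul_L2 {f g : Ω → ℝ} (hf : MemLp f 2 P) (hg : MemLp g 2 P) :
    Integrable (fun ω => f ω * g ω) P := by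
  have := hg.smul hf (r := 1)
    (hpqr := ⟨by simp only [inv_one, ENNReal.inv_two_add_inv_two]⟩)
  exact memLp_one_iff_integrable.1 this

lemma aux_cs_int {f g : Ω → ℝ} (hf : MemLp f 2 P) (hg : MemLp g 2 P) :
    (∫ ω, f ω * g ω ∂P)^2 ≤ (∫ ω, (f ω)^2 ∂P) * (∫ ω, (g ω)^2 ∂P) := by
  have h1 : |∫ ω, f ω * g ω ∂P| ≤ ∫ ω, ‖f ω‖ * ‖g ω‖ ∂P := by
    calc |∫ ω, f ω * g ω ∂P| = ‖∫ ω, f ω * g ω ∂P‖ := (Real.norm_eq_abs _).symm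
    _ ≤ ∫ ω, ‖f ω * g ω‖ ∂P := norm_integral_le_integral_norm _
    _ = ∫ ω, ‖f ω‖ * ‖g ω‖ ∂P := by simp [norm_mul]
  have hconj : (2:ℝ).HolderConjugate 2 := Real.HolderConjugate.two_two
  have h2 := integral_mul_norm_le_Lp_mul_Lq (μ := P) (f := f) (g := g) hconj
      (by simpa using hf) (by simpa using hg)
  have e1 : ∀ (u : Ω → ℝ), ∫ ω, ‖u ω‖ ^ (2:ℝ) ∂P = ∫ ω, (u ω)^2 ∂P := by
    intro u
    refine integral_congr_ae (Filter.Eventually.of_forall fun ω => ?_)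
    simp only []
    rw [show ((2:ℝ)) = ((2:ℕ):ℝ) by norm_num, Real.rpow_natCast (‖u ω‖) 2,
      Real.norm_eq_abs, sq_abs]
  rw [e1 f, e1 g] at h2
  have hfnn : (0:ℝ) ≤ ∫ ω, (f ω)^2 ∂P := integral_nonneg fun ω => sq_nonneg _
  have hgnn : (0:ℝ) ≤ ∫ ω, (g ω)^2 ∂P := integral_nonneg fun ω => sq_nonneg _
  have habs : |∫ ω, f ω * g ω ∂P| ≤
      Real.sqrt (∫ ω, (f ω)^2 ∂P) * Real.sqrt (∫ ω, (g ω)^2 ∂P) := by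
    refine h1.trans (h2.trans_eq ?_)
    rw [Real.sqrt_eq_rpow, Real.sqrt_eq_rpow]
  calc (∫ ω, f ω * g ω ∂P)^2 = |∫ ω, f ω * g ω ∂P|^2 := (sq_abs _).symm
  _ ≤ (Real.sqrt (∫ ω, (f ω)^2 ∂P) * Real.sqrt (∫ ω, (g ω)^2 ∂P))^2 :=
      pow_le_pow_left₀ (abs_nonneg _) habs 2
  _ = (∫ ω, (f ω)^2 ∂P) * (∫ ω, (g ω)^2 ∂P) := by
      rw [mul_pow, Real.sq_sqrt hfnn, Real.sq_sqrt hgnn]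

lemma aux_frob_eq {d : ℕ} (M : Matrix (Fin d) (Fin d) ℝ) :
    frob M = ‖(WithLp.equiv 2 ((Fin d × Fin d) → ℝ)).symm (fun p => M p.1 p.2)‖ := by
  rw [EuclideanSpace.norm_eq, frob, Fintype.sum_prod_type]
  congr 1
  refine Finset.sum_congr rfl fun i _ => Finset.sum_congr rfl fun j _ => ?_
  simp [Real.norm_eq_abs, sq_abs]

lemma aux_frob_add_le {d : ℕ} (A B : Matrix (Fin d) (Fin d) ℝ) :
    frob (A + B) ≤ frob A + frob B := by
  rw [aux_frob_eq, aux_frob_eq, aux_frob_eq]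
  exact le_trans (le_of_eq (by rfl)) (norm_add_le
    ((WithLp.equiv 2 ((Fin d × Fin d) → ℝ)).symm (fun p => A p.1 p.2))
    ((WithLp.equiv 2 ((Fin d × Fin d) → ℝ)).symm (fun p => B p.1 p.2)))

lemma aux_frob_int_mul_le {d : ℕ} (P : Measure Ω) (u v : Fin d → Ω → ℝ)
    (hu : ∀ i, MemLp (u i) 2 P) (hv : ∀ j, MemLp (v j) 2 P) :
    frob (Matrix.of fun i j => ∫ ω, u i ω * v j ω ∂P) ≤
      Real.sqrt (∑ i, ∫ ω, (u i ω)^2 ∂P) * Real.sqrt (∑ j, ∫ ω, (v j ω)^2 ∂P) := by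
  rw [frob, ← Real.sqrt_mul
      (Finset.sum_nonneg fun i _ => integral_nonneg fun ω => sq_nonneg _)]
  apply Real.sqrt_le_sqrt
  rw [Finset.sum_mul_sum]
  refine Finset.sum_le_sum fun i _ => Finset.sum_le_sum fun j _ => ?_
  simpa using aux_cs_int (hu i) (hv j)

lemma aux_centered_sq_le [IsProbabilityMeasure P] {q : Ω → ℝ} (hq : MemLp q 2 P) :
    ∫ ω, (q ω - ∫ ω', q ω' ∂P)^2 ∂P ≤ ∫ ω, (q ω)^2 ∂P := by
  set c := ∫ ω', q ω' ∂P with hc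
  have hqi : Integrable q P := hq.integrable one_le_two
  have hq2 : Integrable (fun ω => (q ω)^2) P := hq.integrable_sq
  have e : (fun ω => (q ω - c)^2) = fun ω => ((q ω)^2 - (2*c) * q ω) + c^2 := by
    funext ω; ring
  have int1 : Integrable (fun ω => (q ω)^2 - (2*c) * q ω) P :=
    hq2.sub (hqi.const_mul _)
  have int2 : Integrable (fun ω => (2*c) * q ω) P := hqi.const_mul _
  have key : ∫ ω, (q ω - c)^2 ∂P = (∫ ω, (q ω)^2 ∂P) - c^2 := by
    rw [e, integral_add int1 (integrable_const _),
      integral_sub hq2 int2, integral_const_mul, integral_const]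
    simp [← hc]
    ring
  rw [key]
  nlinarith [sq_nonneg c]

end Aux

/-- `‖C_{X,X} − C_{Y,Y}‖_F ≤ 2 E[‖X − Y‖²] + 2 (E[‖X − Y‖²])^{1/2} (Tr C_{Y,Y})^{1/2}`. -/
theorem frob_cov_sub_cov_le {d : ℕ} {Ω : Type*} [MeasurableSpace Ω]
    (P : Measure Ω) [IsProbabilityMeasure P]
    (X Y : Ω → EuclideanSpace ℝ (Fin d))
    (hX : MemLp X 2 P) (hY : MemLp Y 2 P) :
    frob (covM P X X - covM P Y Y) ≤
      2 * (∫ ω, ‖X ω - Y ω‖^2 ∂P)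
        + 2 * Real.sqrt (∫ ω, ‖X ω - Y ω‖^2 ∂P) * Real.sqrt ((covM P Y Y).trace) := by
  classical
  -- coordinate functions
  set f : Fin d → Ω → ℝ := fun i ω => X ω i - ∫ ω', X ω' i ∂P with hf_def
  set g : Fin d → Ω → ℝ := fun i ω => Y ω i - ∫ ω', Y ω' i ∂P with hg_def
  set h : Fin d → Ω → ℝ := fun i ω => f i ω - g i ω with hh_def
  have hXi : ∀ i, MemLp (fun ω => X ω i) 2 P := fun i =>
    (EuclideanSpace.proj i : EuclideanSpace ℝ (Fin d) →L[ℝ] ℝ).comp_memLp' hX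
  have hYi : ∀ i, MemLp (fun ω => Y ω i) 2 P := fun i =>
    (EuclideanSpace.proj i : EuclideanSpace ℝ (Fin d) →L[ℝ] ℝ).comp_memLp' hY
  have hfi : ∀ i, MemLp (f i) 2 P := fun i => (hXi i).sub (memLp_const _)
  have hgi : ∀ i, MemLp (g i) 2 P := fun i => (hYi i).sub (memLp_const _)
  have hhi : ∀ i, MemLp (h i) 2 P := fun i => (hfi i).sub (hgi i)
  have hDi : ∀ i, MemLp (fun ω => X ω i - Y ω i) 2 P := fun i => (hXi i).sub (hYi i)
  -- the three matrices
  set A : Matrix (Fin d) (Fin d) ℝ := Matrix.of fun i j => ∫ ω, h i ω * h j ω ∂P with hA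
  set B : Matrix (Fin d) (Fin d) ℝ := Matrix.of fun i j => ∫ ω, h i ω * g j ω ∂P with hB
  set C : Matrix (Fin d) (Fin d) ℝ := Matrix.of fun i j => ∫ ω, g i ω * h j ω ∂P with hC
  have hdecomp : covM P X X - covM P Y Y = A + B + C := by
    ext i j
    have intHH : Integrable (fun ω => h i ω * h j ω) P :=
      aux_integrable_mul_L2 (hhi i) (hhi j)
    have intHG : Integrable (fun ω => h i ω * g j ω) P :=
      aux_integrable_mul_L2 (hhi i) (hgi j)
    have intGH : Integrable (fun ω => g i ω * h j ω) P :=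
      aux_integrable_mul_L2 (hgi i) (hhi j)
    have intGG : Integrable (fun ω => g i ω * g j ω) P :=
      aux_integrable_mul_L2 (hgi i) (hgi j)
    have e : (fun ω => f i ω * f j ω)
        = fun ω => ((h i ω * h j ω + h i ω * g j ω) + g i ω * h j ω) + g i ω * g j ω := by
      funext ω; simp only [hh_def]; ring
    have eXX : covM P X X i j = ∫ ω, f i ω * f j ω ∂P := rfl
    have eYY : covM P Y Y i j = ∫ ω, g i ω * g j ω ∂P := rfl
    simp only [Matrix.sub_apply, Matrix.add_apply, eXX, eYY, hA, hB, hC, Matrix.of_apply]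
    have i1 : Integrable (fun ω => h i ω * h j ω + h i ω * g j ω) P := intHH.add intHG
    have i2 : Integrable (fun ω => (h i ω * h j ω + h i ω * g j ω) + g i ω * h j ω) P :=
      i1.add intGH
    rw [e, integral_add i2 intGG, integral_add i1 intGH, integral_add intHH intHG]
    ring
  -- quantities
  set SH : ℝ := ∑ i, ∫ ω, (h i ω)^2 ∂P with hSH
  set SG : ℝ := ∑ i, ∫ ω, (g i ω)^2 ∂P with hSG
  set E : ℝ := ∫ ω, ‖X ω - Y ω‖^2 ∂P with hEdef
  have hSHnn : 0 ≤ SH := Finset.sum_nonneg fun i _ => integral_nonneg fun ω => sq_nonneg _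
  have hSGnn : 0 ≤ SG := Finset.sum_nonneg fun i _ => integral_nonneg fun ω => sq_nonneg _
  -- E = ∑ ∫ D_i^2
  have hE : E = ∑ i, ∫ ω, (X ω i - Y ω i)^2 ∂P := by
    rw [hEdef, ← integral_finset_sum _ (fun i _ => (hDi i).integrable_sq)]
    refine integral_congr_ae (Filter.Eventually.of_forall fun ω => ?_)
    show ‖X ω - Y ω‖^2 = ∑ i, (X ω i - Y ω i)^2
    rw [EuclideanSpace.norm_eq, Real.sq_sqrt (Finset.sum_nonneg fun i _ => sq_nonneg _)]
    refine Finset.sum_congr rfl fun i _ => ?_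
    simp [Real.norm_eq_abs, sq_abs, PiLp.sub_apply]
  -- ∑ ∫ h_i² ≤ E
  have hHle : SH ≤ E := by
    rw [hE, hSH]
    refine Finset.sum_le_sum fun i _ => ?_
    have hc : ∫ ω', (X ω' i - Y ω' i) ∂P
        = (∫ ω', X ω' i ∂P) - ∫ ω', Y ω' i ∂P :=
      integral_sub ((hXi i).integrable one_le_two) ((hYi i).integrable one_le_two)
    have := aux_centered_sq_le (hDi i)
    rw [hc] at this
    refine le_trans (le_of_eq ?_) this
    refine integral_congr_ae (Filter.Eventually.of_forall fun ω => ?_)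
    simp only [hh_def, hf_def, hg_def]
    ring
  have hEnn : 0 ≤ E := hSHnn.trans hHle
  -- trace
  have htr : (covM P Y Y).trace = SG := by
    rw [Matrix.trace, hSG]
    refine Finset.sum_congr rfl fun i _ => ?_
    show covM P Y Y i i = _
    have : covM P Y Y i i = ∫ ω, g i ω * g i ω ∂P := rfl
    rw [this]
    refine integral_congr_ae (Filter.Eventually.of_forall fun ω => ?_)
    ring
  -- frobenius bounds
  have hAle : frob A ≤ Real.sqrt SH * Real.sqrt SH := by
    rw [hA, hSH]; exact aux_frob_int_mul_le P h h hhi hhi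
  have hBle : frob B ≤ Real.sqrt SH * Real.sqrt SG := by
    rw [hB, hSH, hSG]; exact aux_frob_int_mul_le P h g hhi hgi
  have hCle : frob C ≤ Real.sqrt SG * Real.sqrt SH := by
    rw [hC, hSG, hSH]; exact aux_frob_int_mul_le P g h hgi hhi
  have htri : frob (covM P X X - covM P Y Y) ≤ frob A + frob B + frob C := by
    rw [hdecomp]
    exact le_trans (aux_frob_add_le (A + B) C)
      (add_le_add_left (aux_frob_add_le A B) _)
  -- final arithmetic
  rw [htr]
  have ha2 : Real.sqrt SH * Real.sqrt SH = SH := Real.mul_self_sqrt hSHnn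
  have has : Real.sqrt SH ≤ Real.sqrt E := Real.sqrt_le_sqrt hHle
  have hbnn : 0 ≤ Real.sqrt SG := Real.sqrt_nonneg _
  have hEE : SH ≤ 2 * E := by linarith
  calc frob (covM P X X - covM P Y Y)
      ≤ frob A + frob B + frob C := htri
    _ ≤ (Real.sqrt SH * Real.sqrt SH) + Real.sqrt SH * Real.sqrt SG
          + Real.sqrt SG * Real.sqrt SH := by
        exact add_le_add (add_le_add hAle hBle) hCle
    _ ≤ 2 * E + 2 * Real.sqrt E * Real.sqrt SG := by
        rw [ha2]
        nlinarith [Real.sqrt_nonneg SH, Real.sqrt_nonneg E]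
end
end

section
/- Let K be a Markov kernel on ℝ^d satisfying the quadratic transportation cost inequality T₂(ρ) pointwise (i.e. (1/2) D₂(ν, K(x,·))² ≤ ρ H(ν | K(x,·)) for all x and ν). Then for any probability measure μ and any Markov kernel L, the conditional means m_K(x) := ∫ y K(x,dy) and m_L(x) := ∫ y L(x,dy) satisfy ∫ μ(dx) ‖m_K(x) − m_L(x)‖² ≤ 2ρ H(μ×L | μ×K). -/
open MeasureTheory ProbabilityTheory Matrix
open scoped ENNReal NNReal

noncomputable section

/-- Squared 2-Wasserstein distance (extended-real-valued, via couplings). -/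
def wass2sqE {d : ℕ} (μ ν : Measure (EuclideanSpace ℝ (Fin d))) : ℝ≥0∞ :=
  sInf {r | ∃ P : Measure (EuclideanSpace ℝ (Fin d) × EuclideanSpace ℝ (Fin d)),
    P.fst = μ ∧ P.snd = ν ∧ r = ∫⁻ p, (‖p.1 - p.2‖₊ : ℝ≥0∞)^2 ∂P}

open scoped Classical in
/-- Relative entropy (Kullback–Leibler divergence), with value `⊤` when not absolutely
continuous or not integrable. -/
def relEnt {α : Type*} [MeasurableSpace α] (ν η : Measure α) : ℝ≥0∞ :=
  if ν ≪ η ∧ Integrable (llr ν η) ν then ENNReal.ofReal (∫ x, llr ν η x ∂ν) else ⊤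

/-- Nonnegativity of KL divergence between probability measures. -/
lemma myIntegral_llr_nonneg {α : Type*} [MeasurableSpace α] {ν η : Measure α}
    [IsProbabilityMeasure ν] [IsProbabilityMeasure η] (hν : ν ≪ η)
    (hint : Integrable (llr ν η) ν) : 0 ≤ ∫ x, llr ν η x ∂ν := by
  have hintη : Integrable (fun x => (ν.rnDeriv η x).toReal • llr ν η x) η :=
    (integrable_rnDeriv_smul_iff hν).mpr hint
  have hint1 : Integrable (fun x => (ν.rnDeriv η x).toReal) η :=
    Measure.integrable_toReal_rnDeriv
  have hint2 : Integrable (fun x => (ν.rnDeriv η x).toReal - 1) η :=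
    hint1.sub (integrable_const 1)
  have hle : ∀ᵐ x ∂η, (ν.rnDeriv η x).toReal - 1
      ≤ (ν.rnDeriv η x).toReal • llr ν η x := by
    refine ae_of_all _ fun x => ?_
    have h0 : 0 ≤ (ν.rnDeriv η x).toReal := ENNReal.toReal_nonneg
    set t := (ν.rnDeriv η x).toReal with ht
    have hllr : llr ν η x = Real.log t := rfl
    rcases eq_or_lt_of_le h0 with h | h
    · simp [hllr, ← h]
    · have h1 : 1 - t⁻¹ ≤ Real.log t := Real.one_sub_inv_le_log_of_pos h
      have h2 : t * (1 - t⁻¹) ≤ t * Real.log t :=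
        mul_le_mul_of_nonneg_left h1 h0
      have h3 : t * (1 - t⁻¹) = t - 1 := by field_simp
      rw [hllr, smul_eq_mul]
      linarith
  have h0 : (0 : ℝ) = ∫ x, ((ν.rnDeriv η x).toReal - 1) ∂η := by
    rw [integral_sub hint1 (integrable_const 1), Measure.integral_toReal_rnDeriv hν]
    simp
  calc (0 : ℝ) = ∫ x, ((ν.rnDeriv η x).toReal - 1) ∂η := h0
    _ ≤ ∫ x, (ν.rnDeriv η x).toReal • llr ν η x ∂η := integral_mono_ae hint2 hintη hle
    _ = ∫ x, llr ν η x ∂ν := integral_rnDeriv_smul hν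

/-- Cauchy–Schwarz for the Lebesgue integral against a probability measure. -/
lemma mySq_lintegral_le {α : Type*} [MeasurableSpace α] (P : Measure α)
    [IsProbabilityMeasure P] {f : α → ℝ≥0∞} (hf : Measurable f) :
    (∫⁻ a, f a ∂P) ^ 2 ≤ ∫⁻ a, f a ^ 2 ∂P := by
  have hpq : Real.HolderConjugate 2 2 := Real.HolderConjugate.two_two
  have h := ENNReal.lintegral_mul_le_Lp_mul_Lq P hpq hf.aemeasurable
    (aemeasurable_const (b := (1 : ℝ≥0∞)))
  simp only [mul_one, ENNReal.one_rpow, lintegral_const, measure_univ, one_mul,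
    ENNReal.one_rpow] at h
  have h' : (∫⁻ a, f a ∂P) ≤ (∫⁻ a, f a ^ (2 : ℝ) ∂P) ^ (1 / 2 : ℝ) := by
    simpa using h
  calc (∫⁻ a, f a ∂P) ^ 2 ≤ ((∫⁻ a, f a ^ (2 : ℝ) ∂P) ^ (1 / 2 : ℝ)) ^ 2 :=
        pow_le_pow_left' h' 2
    _ = ∫⁻ a, f a ^ (2 : ℝ) ∂P := by
        rw [← ENNReal.rpow_natCast _ 2, ← ENNReal.rpow_mul]
        norm_num
    _ = ∫⁻ a, f a ^ 2 ∂P := by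
        congr 1; funext a; rw [← ENNReal.rpow_natCast (f a) 2]; norm_num

/-- Jensen-type bound: the squared norm of the mean displacement of a coupling is at most
the expected squared displacement. -/
lemma myMean_bound {E : Type*} [NormedAddCommGroup E] [InnerProductSpace ℝ E]
    [MeasurableSpace E] [BorelSpace E] [SecondCountableTopology E]
    [CompleteSpace E]
    (P : Measure (E × E)) [IsProbabilityMeasure P]
    (h1 : Integrable (fun p : E × E => p.1) P)
    (h2 : Integrable (fun p : E × E => p.2) P) :
    (‖(∫ p, p.2 ∂P) - ∫ p, p.1 ∂P‖₊ : ℝ≥0∞) ^ 2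
      ≤ ∫⁻ p, (‖p.1 - p.2‖₊ : ℝ≥0∞) ^ 2 ∂P := by
  have hv : (∫ p, p.2 ∂P) - ∫ p, p.1 ∂P = ∫ p, (p.2 - p.1) ∂P :=
    (integral_sub h2 h1).symm
  have hmeas : Measurable fun p : E × E => (‖p.2 - p.1‖₊ : ℝ≥0∞) :=
    (continuous_snd.sub continuous_fst).measurable.enorm
  have h21 : Integrable (fun p : E × E => p.2 - p.1) P := h2.sub h1
  have hrev : ∀ a b : E, (‖a - b‖₊ : ℝ≥0∞) = (‖b - a‖₊ : ℝ≥0∞) := fun a b => by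
    rw [← neg_sub b a, nnnorm_neg]
  calc (‖(∫ p, p.2 ∂P) - ∫ p, p.1 ∂P‖₊ : ℝ≥0∞) ^ 2
      = (ENNReal.ofReal ‖∫ p, (p.2 - p.1) ∂P‖) ^ 2 := by
        rw [hv, ofReal_norm, enorm_eq_nnnorm]
    _ ≤ (ENNReal.ofReal (∫ p, ‖p.2 - p.1‖ ∂P)) ^ 2 :=
        pow_le_pow_left' (ENNReal.ofReal_le_ofReal (norm_integral_le_integral_norm _)) 2
    _ = (∫⁻ p, (‖p.2 - p.1‖₊ : ℝ≥0∞) ∂P) ^ 2 := by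
        simp only [ofReal_integral_norm_eq_lintegral_enorm h21, enorm_eq_nnnorm]
    _ ≤ ∫⁻ p, (‖p.2 - p.1‖₊ : ℝ≥0∞) ^ 2 ∂P := mySq_lintegral_le P hmeas
    _ = ∫⁻ p, (‖p.1 - p.2‖₊ : ℝ≥0∞) ^ 2 ∂P := by simp_rw [hrev]

/-- Superadditivity (in fact the chain rule) for relative entropy over a composition
product with a common first marginal. -/
lemma myEntropy_compProd_le {α γ : Type*} [MeasurableSpace α] [MeasurableSpace γ]
    [MeasurableSpace.CountableOrCountablyGenerated α γ]
    (μ : Measure α) [IsProbabilityMeasure μ] (K L : Kernel α γ)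
    [IsMarkovKernel K] [IsMarkovKernel L] :
    ∫⁻ x, relEnt (L x) (K x) ∂μ ≤ relEnt (μ ⊗ₘ L) (μ ⊗ₘ K) := by
  classical
  by_cases hc : (μ ⊗ₘ L) ≪ (μ ⊗ₘ K) ∧ Integrable (llr (μ ⊗ₘ L) (μ ⊗ₘ K)) (μ ⊗ₘ L)
  swap
  · rw [relEnt, if_neg hc]; exact le_top
  obtain ⟨hac, hint⟩ := hc
  set S := Kernel.mutuallySingularSet L K with hS
  have hSmeas : MeasurableSet S := Kernel.measurableSet_mutuallySingularSet L K
  have hpre : ∀ x, Prod.mk x ⁻¹' S = Kernel.mutuallySingularSetSlice L K x := fun x => rfl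
  have hK0 : (μ ⊗ₘ K) S = 0 := by
    rw [Measure.compProd_apply hSmeas]
    simp [hpre, Kernel.measure_mutuallySingularSetSlice]
  have hL0 : (μ ⊗ₘ L) S = 0 := hac hK0
  rw [Measure.compProd_apply hSmeas, lintegral_eq_zero_iff
    (Kernel.measurable_kernel_prodMk_left hSmeas)] at hL0
  have hACae : ∀ᵐ x ∂μ, L x ≪ K x := by
    filter_upwards [hL0] with x hx
    rw [← Kernel.singularPart_eq_zero_iff_absolutelyContinuous,
      Kernel.singularPart_eq_zero_iff_measure_eq_zero]
    simpa [hpre] using hx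
  set g := Kernel.rnDeriv L K with hg
  have hgmeas : Measurable (fun p : α × γ => g p.1 p.2) := Kernel.measurable_rnDeriv L K
  have hwd : ∀ᵐ x ∂μ, (K x).withDensity (g x) = L x := by
    filter_upwards [hACae] with x hx
    have h1 : g x =ᵐ[K x] (L x).rnDeriv (K x) := Kernel.rnDeriv_eq_rnDeriv_measure
    rw [withDensity_congr_ae h1, Measure.withDensity_rnDeriv_eq _ _ hx]
  -- `μ ⊗ₘ L` is the density `g` against `μ ⊗ₘ K`
  have hcompeq : μ ⊗ₘ L = (μ ⊗ₘ K).withDensity (fun p => g p.1 p.2) := by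
    ext s hs
    rw [Measure.compProd_apply hs, withDensity_apply _ hs,
      ← lintegral_indicator hs _, Measure.lintegral_compProd (hgmeas.indicator hs)]
    refine lintegral_congr_ae ?_
    filter_upwards [hwd] with x hx
    have : ∀ y, s.indicator (fun p : α × γ => g p.1 p.2) (x, y)
        = (Prod.mk x ⁻¹' s).indicator (g x) y := by
      intro y
      simp [Set.indicator_apply, Set.mem_preimage]
    rw [lintegral_congr this, lintegral_indicator (measurable_prodMk_left hs) _,
      ← withDensity_apply _ (measurable_prodMk_left hs), hx]
  have hrn : (μ ⊗ₘ L).rnDeriv (μ ⊗ₘ K) =ᵐ[μ ⊗ₘ K] fun p => g p.1 p.2 := by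
    rw [hcompeq]
    exact Measure.rnDeriv_withDensity _ hgmeas
  -- express llr of compProd
  set φ : α × γ → ℝ := fun p => Real.log (g p.1 p.2).toReal with hφ
  have hφmeas : Measurable φ := (hgmeas.ennreal_toReal).log
  have hllr : llr (μ ⊗ₘ L) (μ ⊗ₘ K) =ᵐ[μ ⊗ₘ L] φ := by
    filter_upwards [hac.ae_le hrn] with p hp
    rw [llr_def]
    simp only [hp, hφ]
  have hintφ : Integrable φ (μ ⊗ₘ L) := hint.congr hllr
  have hsec := (Measure.integrable_compProd_iff hφmeas.aestronglyMeasurable).mp hintφ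
  -- inner llr
  have hinner : ∀ᵐ x ∂μ, llr (L x) (K x) =ᵐ[L x] fun y => φ (x, y) := by
    filter_upwards [hACae] with x hx
    have h1 : g x =ᵐ[K x] (L x).rnDeriv (K x) := Kernel.rnDeriv_eq_rnDeriv_measure
    filter_upwards [hx.ae_le h1] with y hy
    rw [llr_def]
    simp only [← hy, hφ]
  have hrelE : ∀ᵐ x ∂μ, relEnt (L x) (K x) = ENNReal.ofReal (∫ y, φ (x, y) ∂(L x))
      ∧ 0 ≤ ∫ y, φ (x, y) ∂(L x) := by
    filter_upwards [hACae, hinner, hsec.1] with x hx hieq hxi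
    have hLint : Integrable (llr (L x) (K x)) (L x) := hxi.congr hieq.symm
    have heq : ∫ y, llr (L x) (K x) y ∂(L x) = ∫ y, φ (x, y) ∂(L x) :=
      integral_congr_ae hieq
    refine ⟨?_, ?_⟩
    · rw [relEnt, if_pos ⟨hx, hLint⟩, heq]
    · rw [← heq]
      exact myIntegral_llr_nonneg hx hLint
  -- integrability of the inner integral
  have hImeas : StronglyMeasurable fun x => ∫ y, φ (x, y) ∂(L x) :=
    hφmeas.stronglyMeasurable.integral_kernel_prod_right'
  have hIint : Integrable (fun x => ∫ y, φ (x, y) ∂(L x)) μ := by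
    refine Integrable.mono hsec.2 hImeas.aestronglyMeasurable ?_
    refine ae_of_all _ fun x => ?_
    calc ‖∫ y, φ (x, y) ∂(L x)‖ ≤ ∫ y, ‖φ (x, y)‖ ∂(L x) := norm_integral_le_integral_norm _
      _ ≤ ‖∫ y, ‖φ (x, y)‖ ∂(L x)‖ := le_abs_self _
  calc ∫⁻ x, relEnt (L x) (K x) ∂μ
      = ∫⁻ x, ENNReal.ofReal (∫ y, φ (x, y) ∂(L x)) ∂μ := by
        refine lintegral_congr_ae ?_
        filter_upwards [hrelE] with x hx using hx.1
    _ = ENNReal.ofReal (∫ x, ∫ y, φ (x, y) ∂(L x) ∂μ) := by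
        rw [ofReal_integral_eq_lintegral_ofReal hIint]
        filter_upwards [hrelE] with x hx using hx.2
    _ = ENNReal.ofReal (∫ p, φ p ∂(μ ⊗ₘ L)) := by
        rw [Measure.integral_compProd hintφ]
    _ = ENNReal.ofReal (∫ p, llr (μ ⊗ₘ L) (μ ⊗ₘ K) p ∂(μ ⊗ₘ L)) := by
        rw [integral_congr_ae hllr]
    _ = relEnt (μ ⊗ₘ L) (μ ⊗ₘ K) := by rw [relEnt, if_pos ⟨hac, hint⟩]
    _ ≤ relEnt (μ ⊗ₘ L) (μ ⊗ₘ K) := le_rfl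

/-- Entropic bound for conditional means: if `K` satisfies `T₂(ρ)` pointwise, then
`∫ μ(dx) ‖m_K(x) − m_L(x)‖² ≤ 2ρ H(μ×L | μ×K)`. -/
theorem conditional_mean_entropic_bound {d : ℕ}
    (μ : Measure (EuclideanSpace ℝ (Fin d))) [IsProbabilityMeasure μ]
    (K L : Kernel (EuclideanSpace ℝ (Fin d)) (EuclideanSpace ℝ (Fin d)))
    [IsMarkovKernel K] [IsMarkovKernel L] (ρ : ℝ) (hρ : 0 < ρ)
    (hK2 : ∀ x, MemLp id 2 (K x)) (hL2 : ∀ x, MemLp id 2 (L x))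
    (hT2 : ∀ x (ν : Measure (EuclideanSpace ℝ (Fin d))), IsProbabilityMeasure ν →
      wass2sqE ν (K x) ≤ 2 * ENNReal.ofReal ρ * relEnt ν (K x)) :
    ∫⁻ x, (‖(∫ y, y ∂(K x)) - ∫ y, y ∂(L x)‖₊ : ℝ≥0∞)^2 ∂μ ≤
      2 * ENNReal.ofReal ρ * relEnt (μ ⊗ₘ L) (μ ⊗ₘ K) := by
  set E := EuclideanSpace ℝ (Fin d)
  have key : ∀ x, (‖(∫ y, y ∂(K x)) - ∫ y, y ∂(L x)‖₊ : ℝ≥0∞)^2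
      ≤ 2 * ENNReal.ofReal ρ * relEnt (L x) (K x) := by
    intro x
    refine le_trans ?_ (hT2 x (L x) inferInstance)
    refine le_sInf ?_
    rintro r ⟨P, hPfst, hPsnd, rfl⟩
    have hPprob : IsProbabilityMeasure P := by
      constructor
      rw [← Measure.fst_univ, hPfst]
      exact measure_univ
    have hi1 : Integrable (fun p : E × E => p.1) P := by
      have h : Integrable (fun y : E => y) (Measure.map Prod.fst P) := by
        rw [show Measure.map Prod.fst P = P.fst from rfl, hPfst]
        exact (hL2 x).integrable one_le_two
      exact (integrable_map_measure aestronglyMeasurable_id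
        measurable_fst.aemeasurable).mp h
    have hi2 : Integrable (fun p : E × E => p.2) P := by
      have h : Integrable (fun y : E => y) (Measure.map Prod.snd P) := by
        rw [show Measure.map Prod.snd P = P.snd from rfl, hPsnd]
        exact (hK2 x).integrable one_le_two
      exact (integrable_map_measure aestronglyMeasurable_id
        measurable_snd.aemeasurable).mp h
    have hmK : ∫ y, y ∂(K x) = ∫ p, p.2 ∂P := by
      rw [← hPsnd, show P.snd = Measure.map Prod.snd P from rfl]
      exact integral_map (f := fun y : E => y) measurable_snd.aemeasurable
        aestronglyMeasurable_id
    have hmL : ∫ y, y ∂(L x) = ∫ p, p.1 ∂P := by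
      rw [← hPfst, show P.fst = Measure.map Prod.fst P from rfl]
      exact integral_map (f := fun y : E => y) measurable_fst.aemeasurable
        aestronglyMeasurable_id
    rw [hmK, hmL]
    exact myMean_bound P hi1 hi2
  calc ∫⁻ x, (‖(∫ y, y ∂(K x)) - ∫ y, y ∂(L x)‖₊ : ℝ≥0∞)^2 ∂μ
      ≤ ∫⁻ x, 2 * ENNReal.ofReal ρ * relEnt (L x) (K x) ∂μ := lintegral_mono key
    _ = 2 * ENNReal.ofReal ρ * ∫⁻ x, relEnt (L x) (K x) ∂μ :=
        lintegral_const_mul' _ _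
          (ENNReal.mul_ne_top (by norm_num) ENNReal.ofReal_ne_top)
    _ ≤ 2 * ENNReal.ofReal ρ * relEnt (μ ⊗ₘ L) (μ ⊗ₘ K) :=
        mul_le_mul_right (myEntropy_compProd_le μ K L) _
end
end
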